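/- Let k01, k10 : ℝ → ℝ be nonnegative continuously differentiable functions, A = −(k01 + k10), let 𝒟 = [a,b] be compact with ν = min_{v ∈ 𝒟}(k01(v)+k10(v)) > 0, and set g₀ = max_{𝒟} k01, g₁ = max_{𝒟} |k01'|, g₂ = max_{𝒟} |A'|. Let w : (−∞,0] → (0,1] be measurable with w_t → 0 as t → −∞ and ∫_{−∞}^0 e^{ν τ}/w_τ dτ < ∞. Define the functional F on measurable signals V : (−∞,0] → 𝒟 by F(V) = ∫_{−∞}^0 exp(∫_τ^0 A(V_s) ds) · k01(V_τ) dτ. Then F is well defined and satisfies the Lipschitz bound |F(V) − F(V')| ≤ M · ‖V − V'‖_w with M = (g₁ + g₀ g₂/ν) · ∫_{−∞}^0 e^{ν τ}/w_τ dτ; in particular F is continuous on the metric space of 𝒟-valued measurable signals on (−∞,0] equipped with the metric d(V,V') = ‖V − V'‖_w, i.e., F is a fading memory functional. -/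

import Mathlib

open MeasureTheory

section Helpers

lemma myExpInt' {c : ℝ} (hc : 0 < c) (d : ℝ) :
    IntegrableOn (fun τ => Real.exp (c * τ)) (Set.Iic d) := by
  have m : MeasurableEmbedding fun x : ℝ => -x := (Homeomorph.neg ℝ).measurableEmbedding
  have h : IntegrableOn (fun x : ℝ => Real.exp (-c * x)) (Set.Ici (-d)) :=
    Iff.mpr integrableOn_Ici_iff_integrableOn_Ioi (exp_neg_integrableOn_Ioi (-d) hc)
  rw [IntegrableOn, ← Measure.map_neg_eq_self (volume : Measure ℝ), ← IntegrableOn,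
    m.integrableOn_map_iff]
  simpa [Function.comp_def, Set.neg_preimage, mul_comm, mul_neg, neg_mul] using h

lemma myExpIntegral {ν : ℝ} (hν : 0 < ν) (s : ℝ) :
    ∫ τ in Set.Iio s, Real.exp (ν * τ) = Real.exp (ν * s) / ν := by
  rw [Measure.restrict_congr_set Iio_ae_eq_Iic]
  have hderiv : ∀ x ∈ Set.Iic s, HasDerivAt (fun τ => Real.exp (ν * τ) / ν)
      (Real.exp (ν * x)) x := by
    intro x _
    have h1 : HasDerivAt (fun τ => ν * τ) ν x := by
      simpa using (hasDerivAt_id x).const_mul ν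
    have := (Real.hasDerivAt_exp (ν * x)).comp x h1
    have h2 := this.div_const ν
    simpa [mul_div_assoc, mul_div_cancel_right₀ _ hν.ne'] using h2
  have htend : Filter.Tendsto (fun τ => Real.exp (ν * τ) / ν) Filter.atBot (nhds 0) := by
    have h1 : Filter.Tendsto (fun τ : ℝ => ν * τ) Filter.atBot Filter.atBot :=
      Filter.Tendsto.const_mul_atBot hν Filter.tendsto_id
    have h2 := Real.tendsto_exp_atBot.comp h1
    simpa using h2.div_const ν
  have := integral_Iic_of_hasDerivAt_of_tendsto' hderiv (myExpInt' hν s) htend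
  rw [this]; ring

lemma myExpLip {x y c : ℝ} (hx : x ≤ c) (hy : y ≤ c) :
    |Real.exp x - Real.exp y| ≤ Real.exp c * |x - y| := by
  wlog h : y ≤ x generalizing x y
  · rw [abs_sub_comm, abs_sub_comm x y]; exact this hy hx (le_of_not_ge h)
  rw [abs_of_nonneg (sub_nonneg.2 (Real.exp_le_exp.2 h)), abs_of_nonneg (sub_nonneg.2 h)]
  have h1 : Real.exp x * (1 + (y - x)) ≤ Real.exp x * Real.exp (y - x) := by
    have := Real.add_one_le_exp (y - x)
    nlinarith [Real.exp_pos x]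
  rw [← Real.exp_add] at h1
  have h2 : Real.exp x - Real.exp y ≤ Real.exp x * (x - y) := by
    have : x + (y - x) = y := by ring
    rw [this] at h1; nlinarith
  calc Real.exp x - Real.exp y ≤ Real.exp x * (x - y) := h2
    _ ≤ Real.exp c * (x - y) := by
        have := Real.exp_le_exp.2 hx; nlinarith

lemma myLipOfDeriv {f : ℝ → ℝ} (hf : ContDiff ℝ 1 f) {a b g : ℝ}
    (hg : ∀ x ∈ Set.Icc a b, |deriv f x| ≤ g) {u u' : ℝ}
    (hu : u ∈ Set.Icc a b) (hu' : u' ∈ Set.Icc a b) :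
    |f u - f u'| ≤ g * |u - u'| := by
  have := (convex_Icc a b).norm_image_sub_le_of_norm_hasDerivWithin_le
    (f := f) (f' := deriv f)
    (fun x _ => ((hf.differentiable one_ne_zero).differentiableAt.hasDerivAt).hasDerivWithinAt)
    (fun x hx => by simpa [Real.norm_eq_abs] using hg x hx) hu' hu
  simpa [Real.norm_eq_abs] using this

lemma myII {h : ℝ → ℝ} (hm : Measurable h) {K : ℝ} (hb : ∀ s, |h s| ≤ K) (x y : ℝ) :
    IntervalIntegrable h volume x y := by
  constructor <;>
  · apply Integrable.mono' (integrable_const K) hm.aestronglyMeasurable.restrict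
    exact Filter.Eventually.of_forall fun s => by simpa using hb s

lemma myII2 {h : ℝ → ℝ} (hm : Measurable h) {K τ : ℝ} (hτ : τ ≤ 0)
    (hb : ∀ s ≤ (0:ℝ), |h s| ≤ K) : IntervalIntegrable h volume τ 0 := by
  rw [intervalIntegrable_iff_integrableOn_Ioc_of_le hτ]
  apply Integrable.mono' (integrable_const K) hm.aestronglyMeasurable.restrict
  rw [ae_restrict_iff' measurableSet_Ioc]
  exact Filter.Eventually.of_forall fun s hs => by simpa using hb s hs.2

lemma mySwap {ν K : ℝ} (hν : 0 < ν) {G : ℝ → ℝ} (hG : Measurable G)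
    (hG0 : ∀ s, 0 ≤ G s) (hGbd : ∀ s ≤ (0:ℝ), G s ≤ K) :
    IntegrableOn (fun τ => Real.exp (ν * τ) * ∫ s in Set.Ioc τ 0, G s) (Set.Iic 0) ∧
    ∫ τ in Set.Iic (0:ℝ), Real.exp (ν * τ) * ∫ s in Set.Ioc τ 0, G s
      = (1 / ν) * ∫ s in Set.Iic (0:ℝ), Real.exp (ν * s) * G s := by
  have hK0 : 0 ≤ K := le_trans (hG0 0) (hGbd 0 le_rfl)
  set μp := (volume.restrict (Set.Iic (0:ℝ))).prod (volume : Measure ℝ) with hμp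
  set f : ℝ → ℝ → ℝ := fun τ s => Real.exp (ν * τ) * Set.indicator (Set.Ioc τ 0) G s with hfdef
  have hS : MeasurableSet ({p : ℝ × ℝ | p.1 < p.2} ∩ {p : ℝ × ℝ | p.2 ≤ 0}) :=
    (measurableSet_lt measurable_fst measurable_snd).inter
      (measurable_snd measurableSet_Iic)
  have hfun : Function.uncurry f = fun p : ℝ × ℝ => Real.exp (ν * p.1) *
      Set.indicator ({p : ℝ × ℝ | p.1 < p.2} ∩ {p : ℝ × ℝ | p.2 ≤ 0})
        (fun q : ℝ × ℝ => G q.2) p := by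
    funext p
    simp only [Function.uncurry, hfdef, Set.indicator_apply, Set.mem_Ioc, Set.mem_inter_iff,
      Set.mem_setOf_eq]
  have hfm : Measurable (Function.uncurry f) := by
    rw [hfun]
    exact ((Real.continuous_exp.comp (continuous_const.mul continuous_fst)).measurable).mul
      ((hG.comp measurable_snd).indicator hS)
  set B : ℝ × ℝ → ℝ := fun p => Real.exp (ν / 2 * p.1) *
      Set.indicator (Set.Iic (0:ℝ)) (fun s => K * Real.exp (ν / 2 * s)) p.2 with hBdef
  have hBint : Integrable B μp := by
    apply Integrable.mul_prod (myExpInt' (half_pos hν) 0)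
    rw [integrable_indicator_iff measurableSet_Iic]
    exact (myExpInt' (half_pos hν) 0).const_mul K
  have hfB : ∀ p : ℝ × ℝ, ‖Function.uncurry f p‖ ≤ B p := by
    rintro ⟨τ, s⟩
    by_cases h : s ∈ Set.Ioc τ 0
    · have h1 : Function.uncurry f (τ, s) = Real.exp (ν * τ) * G s := by
        simp [Function.uncurry, hfdef, Set.indicator_of_mem h]
      have hτs : τ ≤ s := h.1.le
      have hs0 : s ≤ 0 := h.2
      have hGb := hGbd s hs0
      have hexp : Real.exp (ν * τ) ≤ Real.exp (ν / 2 * τ) * Real.exp (ν / 2 * s) := by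
        rw [← Real.exp_add]
        apply Real.exp_le_exp.2
        nlinarith
      rw [h1, Real.norm_eq_abs, abs_of_nonneg (mul_nonneg (Real.exp_pos _).le (hG0 s))]
      rw [hBdef]
      simp only [Set.indicator_of_mem (Set.mem_Iic.2 hs0)]
      calc Real.exp (ν * τ) * G s ≤ (Real.exp (ν / 2 * τ) * Real.exp (ν / 2 * s)) * K := by
            apply mul_le_mul hexp hGb (hG0 s) (mul_nonneg (Real.exp_pos _).le (Real.exp_pos _).le)
        _ = Real.exp (ν / 2 * τ) * (K * Real.exp (ν / 2 * s)) := by ring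
    · have h1 : Function.uncurry f (τ, s) = 0 := by
        simp [Function.uncurry, hfdef, Set.indicator_of_notMem h]
      rw [h1, norm_zero, hBdef]
      apply mul_nonneg (Real.exp_pos _).le
      apply Set.indicator_nonneg
      intro x _
      exact mul_nonneg hK0 (Real.exp_pos _).le
  have hfint : Integrable (Function.uncurry f) μp :=
    hBint.mono' hfm.aestronglyMeasurable (Filter.Eventually.of_forall hfB)
  have hmarg : ∀ τ : ℝ, (∫ s, f τ s) = Real.exp (ν * τ) * ∫ s in Set.Ioc τ 0, G s := by
    intro τ
    rw [hfdef]
    simp only []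
    rw [integral_const_mul, integral_indicator measurableSet_Ioc]
  constructor
  · have h1 := hfint.integral_prod_left
    apply h1.congr
    exact Filter.Eventually.of_forall fun τ => hmarg τ
  · have hswap := integral_integral_swap hfint
    have hL : (∫ τ in Set.Iic (0:ℝ), ∫ s, f τ s) =
        ∫ τ in Set.Iic (0:ℝ), Real.exp (ν * τ) * ∫ s in Set.Ioc τ 0, G s :=
      setIntegral_congr_fun measurableSet_Iic fun τ _ => hmarg τ
    have hR : ∀ s : ℝ, (∫ τ in Set.Iic (0:ℝ), f τ s) =
        Set.indicator (Set.Iic (0:ℝ)) (fun s => G s * (Real.exp (ν * s) / ν)) s := by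
      intro s
      by_cases hs : s ≤ 0
      · have heq : ∀ τ : ℝ, f τ s =
            Set.indicator (Set.Iio s) (fun τ => Real.exp (ν * τ) * G s) τ := by
          intro τ
          rw [hfdef]
          simp only [Set.indicator_apply, Set.mem_Ioc, Set.mem_Iio]
          by_cases hτ : τ < s
          · simp [hτ, hs]
          · simp [hτ]
        rw [show (fun τ => f τ s) = fun τ =>
            Set.indicator (Set.Iio s) (fun τ => Real.exp (ν * τ) * G s) τ from funext heq]
        have hinter : Set.Iio s ∩ Set.Iic (0:ℝ) = Set.Iio s :=
          Set.inter_eq_left.2 fun τ hτ => Set.mem_Iic.2 (le_trans (le_of_lt hτ) hs)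
        rw [integral_indicator measurableSet_Iio,
          Measure.restrict_restrict measurableSet_Iio, hinter,
          integral_mul_const, myExpIntegral hν s,
          Set.indicator_of_mem (Set.mem_Iic.2 hs)]
        ring
      · have heq : ∀ τ : ℝ, f τ s = 0 := by
          intro τ
          rw [hfdef]
          simp only []
          rw [Set.indicator_of_notMem (by simp [Set.mem_Ioc]; intro h; linarith), mul_zero]
        simp only [heq, integral_zero]
        rw [Set.indicator_of_notMem (by simpa using hs)]
    rw [hL] at hswap
    rw [hswap, show (fun s => ∫ τ in Set.Iic (0:ℝ), f τ s) =
        fun s => Set.indicator (Set.Iic (0:ℝ)) (fun s => G s * (Real.exp (ν * s) / ν)) s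
        from funext hR]
    rw [integral_indicator measurableSet_Iic, ← integral_const_mul]
    apply setIntegral_congr_fun measurableSet_Iic
    intro s _
    ring

end Helpers

/-- fading memory property, Theorem 1: the functional
`F(V) = ∫_{−∞}^0 exp(∫_τ^0 A(V_s) ds)·k01(V_τ) dτ` induced by the DMS dynamics
is well defined on measurable `𝒟`-valued signals on `(−∞,0]`, satisfies the
Lipschitz bound `|F(V) − F(V')| ≤ M·‖V − V'‖_w` with
`M = (g₁ + g₀g₂/ν)·∫_{−∞}^0 e^{ντ}/w_τ dτ`, and in particular is continuous
with respect to the weighted norm `‖V‖_w = ess sup_{t ≤ 0} w_t |V_t|`, i.e., it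
is a fading memory functional. -/
theorem dms_fading_memory_functional
    (k01 k10 A : ℝ → ℝ)
    (hk01 : ContDiff ℝ 1 k01) (hk10 : ContDiff ℝ 1 k10)
    (hk01n : ∀ v, 0 ≤ k01 v) (hk10n : ∀ v, 0 ≤ k10 v)
    (hA : ∀ v, A v = -(k01 v + k10 v))
    (a b ν : ℝ) (hab : a ≤ b)
    (hν : IsLeast ((fun v => k01 v + k10 v) '' Set.Icc a b) ν) (hν0 : 0 < ν)
    (g₀ g₁ g₂ : ℝ)
    (hg₀ : IsGreatest (k01 '' Set.Icc a b) g₀)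
    (hg₁ : IsGreatest ((fun v => |deriv k01 v|) '' Set.Icc a b) g₁)
    (hg₂ : IsGreatest ((fun v => |deriv A v|) '' Set.Icc a b) g₂)
    (w : ℝ → ℝ) (hwm : Measurable w)
    (hw : ∀ t ≤ (0 : ℝ), 0 < w t ∧ w t ≤ 1)
    (hw0 : Filter.Tendsto w Filter.atBot (nhds 0))
    (hwint : IntegrableOn (fun τ => Real.exp (ν * τ) / w τ) (Set.Iic 0))
    (M : ℝ)
    (hM : M = (g₁ + g₀ * g₂ / ν) * ∫ τ in Set.Iic (0 : ℝ), Real.exp (ν * τ) / w τ)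
    (F : (ℝ → ℝ) → ℝ)
    (hF : ∀ V : ℝ → ℝ,
      F V = ∫ τ in Set.Iic (0 : ℝ), Real.exp (∫ s in τ..0, A (V s)) * k01 (V τ)) :
    (∀ V : ℝ → ℝ, Measurable V → (∀ t ≤ (0 : ℝ), V t ∈ Set.Icc a b) →
      IntegrableOn (fun τ => Real.exp (∫ s in τ..0, A (V s)) * k01 (V τ))
        (Set.Iic 0)) ∧
    (∀ V V' : ℝ → ℝ, Measurable V → Measurable V' →
      (∀ t ≤ (0 : ℝ), V t ∈ Set.Icc a b) → (∀ t ≤ (0 : ℝ), V' t ∈ Set.Icc a b) →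
      |F V - F V'| ≤ M *
        essSup (fun t => w t * |V t - V' t|) (volume.restrict (Set.Iic (0 : ℝ)))) ∧
    (∀ ε > (0 : ℝ), ∃ δ > (0 : ℝ), ∀ V V' : ℝ → ℝ, Measurable V → Measurable V' →
      (∀ t ≤ (0 : ℝ), V t ∈ Set.Icc a b) → (∀ t ≤ (0 : ℝ), V' t ∈ Set.Icc a b) →
      essSup (fun t => w t * |V t - V' t|) (volume.restrict (Set.Iic (0 : ℝ))) < δ →
      |F V - F V'| < ε) := by
  have hAfun : A = fun v => -(k01 v + k10 v) := funext hA
  have hAcont : Continuous A := by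
    rw [hAfun]; exact (hk01.continuous.add hk10.continuous).neg
  have hAc : ContDiff ℝ 1 A := by rw [hAfun]; exact (hk01.add hk10).neg
  have hνle : ∀ v ∈ Set.Icc a b, A v ≤ -ν := by
    intro v hv
    have := hν.2 ⟨v, hv, rfl⟩
    rw [hA v]; simp only at this; linarith
  have hk01le : ∀ v ∈ Set.Icc a b, k01 v ≤ g₀ := fun v hv => hg₀.2 ⟨v, hv, rfl⟩
  have hg₀0 : 0 ≤ g₀ := by obtain ⟨v, _, hvv⟩ := hg₀.1; exact hvv ▸ hk01n v
  have hg₁0 : 0 ≤ g₁ := by obtain ⟨v, _, hvv⟩ := hg₁.1; exact hvv ▸ abs_nonneg _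
  have hg₂0 : 0 ≤ g₂ := by obtain ⟨v, _, hvv⟩ := hg₂.1; exact hvv ▸ abs_nonneg _
  have hg₁b : ∀ x ∈ Set.Icc a b, |deriv k01 x| ≤ g₁ := fun x hx => hg₁.2 ⟨x, hx, rfl⟩
  have hg₂b : ∀ x ∈ Set.Icc a b, |deriv A x| ≤ g₂ := fun x hx => hg₂.2 ⟨x, hx, rfl⟩
  obtain ⟨CA, hCA⟩ : ∃ C : ℝ, ∀ v ∈ Set.Icc a b, |A v| ≤ C := by
    obtain ⟨C, hC⟩ := (isCompact_Icc (a := a) (b := b)).exists_bound_of_continuousOn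
      hAcont.continuousOn
    exact ⟨C, fun v hv => by simpa [Real.norm_eq_abs] using hC v hv⟩
  -- the exponent bound
  have hIle : ∀ V : ℝ → ℝ, Measurable V → (∀ t ≤ (0:ℝ), V t ∈ Set.Icc a b) →
      ∀ τ ≤ (0:ℝ), (∫ s in τ..0, A (V s)) ≤ ν * τ := by
    intro V hV hVm τ hτ
    have hint1 : IntervalIntegrable (fun s => A (V s)) volume τ 0 :=
      myII2 (hAcont.measurable.comp hV) hτ (fun s hs => hCA _ (hVm s hs))
    have hint2 : IntervalIntegrable (fun _ : ℝ => -ν) volume τ 0 := intervalIntegrable_const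
    have h1 := intervalIntegral.integral_mono_on hτ hint1 hint2
      (fun s hs => hνle _ (hVm s hs.2))
    have h2 : (∫ _ in τ..0, (-ν : ℝ)) = ν * τ := by
      rw [intervalIntegral.integral_const]; simp; ring
    linarith [h1, h2.le, h2.ge]
  -- measurability of the integrand
  have hmeas : ∀ V : ℝ → ℝ, Measurable V → (∀ t ≤ (0:ℝ), V t ∈ Set.Icc a b) →
      AEStronglyMeasurable (fun τ => Real.exp (∫ s in τ..0, A (V s)) * k01 (V τ))
        (volume.restrict (Set.Iic 0)) := by
    intro V hV hVm
    set W : ℝ → ℝ := fun s => V (min s 0) with hW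
    have hWm : Measurable W := hV.comp (measurable_id.min measurable_const)
    have hWb : ∀ s, |A (W s)| ≤ CA := fun s => hCA _ (hVm _ (min_le_right s 0))
    have hii : ∀ x y : ℝ, IntervalIntegrable (fun s => A (W s)) volume x y :=
      fun x y => myII (hAcont.measurable.comp hWm) hWb x y
    have hcont : Continuous fun τ => ∫ s in (0:ℝ)..τ, A (W s) :=
      intervalIntegral.continuous_primitive hii 0
    have hcont2 : Continuous fun τ => Real.exp (∫ s in τ..0, A (W s)) := by
      have heq : (fun τ : ℝ => Real.exp (∫ s in τ..0, A (W s)))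
          = fun τ => Real.exp (-(∫ s in (0:ℝ)..τ, A (W s))) := by
        funext τ; rw [intervalIntegral.integral_symm]
      rw [heq]
      exact Real.continuous_exp.comp hcont.neg
    have hnice : AEStronglyMeasurable
        (fun τ => Real.exp (∫ s in τ..0, A (W s)) * k01 (V τ))
        (volume.restrict (Set.Iic 0)) :=
      ((hcont2.measurable).mul ((hk01.continuous.measurable).comp hV)).aestronglyMeasurable
    apply hnice.congr
    rw [Filter.EventuallyEq, ae_restrict_iff' measurableSet_Iic]
    refine Filter.Eventually.of_forall fun τ hτ => ?_
    have : (∫ s in τ..0, A (W s)) = ∫ s in τ..0, A (V s) := by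
      apply intervalIntegral.integral_congr
      intro s hs
      rw [Set.uIcc_of_le (hτ : τ ≤ 0)] at hs
      simp only [hW, min_eq_left (hs.2 : s ≤ (0:ℝ))]
    rw [this]
  -- Part 1: integrability
  have hint : ∀ V : ℝ → ℝ, Measurable V → (∀ t ≤ (0:ℝ), V t ∈ Set.Icc a b) →
      IntegrableOn (fun τ => Real.exp (∫ s in τ..0, A (V s)) * k01 (V τ)) (Set.Iic 0) := by
    intro V hV hVm
    apply Integrable.mono' ((myExpInt' hν0 0).const_mul g₀) (hmeas V hV hVm)
    rw [ae_restrict_iff' measurableSet_Iic]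
    refine Filter.Eventually.of_forall fun τ hτ => ?_
    rw [Real.norm_eq_abs, abs_of_nonneg (mul_nonneg (Real.exp_pos _).le (hk01n _))]
    calc Real.exp (∫ s in τ..0, A (V s)) * k01 (V τ)
        ≤ Real.exp (ν * τ) * g₀ :=
          mul_le_mul (Real.exp_le_exp.2 (hIle V hV hVm τ hτ)) (hk01le _ (hVm τ hτ))
            (hk01n _) (Real.exp_pos _).le
      _ = g₀ * Real.exp (ν * τ) := mul_comm _ _
  have hC0 : 0 ≤ ∫ τ in Set.Iic (0:ℝ), Real.exp (ν * τ) / w τ :=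
    setIntegral_nonneg measurableSet_Iic fun τ hτ =>
      div_nonneg (Real.exp_pos _).le (hw τ hτ).1.le
  have hcoef0 : 0 ≤ g₁ + g₀ * g₂ / ν := by positivity
  have hM0 : 0 ≤ M := hM ▸ mul_nonneg hcoef0 hC0
  have main : ∀ V V' : ℝ → ℝ, Measurable V → Measurable V' →
      (∀ t ≤ (0:ℝ), V t ∈ Set.Icc a b) → (∀ t ≤ (0:ℝ), V' t ∈ Set.Icc a b) →
      |F V - F V'| ≤ M * essSup (fun t => w t * |V t - V' t|)
        (volume.restrict (Set.Iic (0:ℝ))) := by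
    intro V V' hV hV' hVm hV'm
    set N := essSup (fun t => w t * |V t - V' t|)
      (volume.restrict (Set.Iic (0:ℝ))) with hNdef
    set G : ℝ → ℝ := fun s => |V s - V' s| with hGdef
    have hGm : Measurable G := (hV.sub hV').abs
    have hG0 : ∀ s, 0 ≤ G s := fun s => abs_nonneg _
    have hGbd : ∀ s ≤ (0:ℝ), G s ≤ b - a := by
      intro s hs
      obtain ⟨h1, h2⟩ := hVm s hs
      obtain ⟨h3, h4⟩ := hV'm s hs
      exact abs_le.2 ⟨by linarith, by linarith⟩
    have hNbd : ∀ᵐ τ ∂(volume.restrict (Set.Iic (0:ℝ))), w τ * |V τ - V' τ| ≤ N := by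
      apply ae_le_essSup
      refine ⟨b - a, ?_⟩
      rw [Filter.eventually_map, ae_restrict_iff' measurableSet_Iic]
      refine Filter.Eventually.of_forall fun τ hτ => ?_
      calc w τ * |V τ - V' τ| ≤ 1 * (b - a) :=
            mul_le_mul (hw τ hτ).2 (hGbd τ hτ) (abs_nonneg _) zero_le_one
        _ = b - a := one_mul _
    obtain ⟨hT2int, hT2eq⟩ := mySwap hν0 hGm hG0 hGbd
    have hT1m : AEStronglyMeasurable (fun s => Real.exp (ν * s) * G s)
        (volume.restrict (Set.Iic (0:ℝ))) :=
      ((Real.continuous_exp.comp (continuous_const.mul continuous_id)).measurable.mul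
        hGm).aestronglyMeasurable
    have hT1int : IntegrableOn (fun s => Real.exp (ν * s) * G s) (Set.Iic 0) := by
      apply Integrable.mono' ((myExpInt' hν0 0).const_mul (b - a)) hT1m
      rw [ae_restrict_iff' measurableSet_Iic]
      refine Filter.Eventually.of_forall fun s hs => ?_
      rw [Real.norm_eq_abs, abs_of_nonneg (mul_nonneg (Real.exp_pos _).le (hG0 s))]
      calc Real.exp (ν * s) * G s ≤ Real.exp (ν * s) * (b - a) :=
            mul_le_mul_of_nonneg_left (hGbd s hs) (Real.exp_pos _).le
        _ = (b - a) * Real.exp (ν * s) := mul_comm _ _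
    have hT1le : (∫ s in Set.Iic (0:ℝ), Real.exp (ν * s) * G s)
        ≤ N * ∫ τ in Set.Iic (0:ℝ), Real.exp (ν * τ) / w τ := by
      have hae : ∀ᵐ τ ∂(volume.restrict (Set.Iic (0:ℝ))),
          Real.exp (ν * τ) * G τ ≤ N * (Real.exp (ν * τ) / w τ) := by
        filter_upwards [hNbd, ae_restrict_mem measurableSet_Iic] with τ h1 h2
        have hwτ := (hw τ h2).1
        have hGτ : G τ ≤ N / w τ := by
          rw [le_div_iff₀ hwτ]
          calc G τ * w τ = w τ * |V τ - V' τ| := mul_comm _ _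
            _ ≤ N := h1
        calc Real.exp (ν * τ) * G τ ≤ Real.exp (ν * τ) * (N / w τ) :=
              mul_le_mul_of_nonneg_left hGτ (Real.exp_pos _).le
          _ = N * (Real.exp (ν * τ) / w τ) := by ring
      have := integral_mono_ae hT1int (hwint.const_mul N) hae
      rwa [integral_const_mul] at this
    set f1 : ℝ → ℝ := fun τ => Real.exp (∫ s in τ..0, A (V s)) * k01 (V τ) with hf1
    set f2 : ℝ → ℝ := fun τ => Real.exp (∫ s in τ..0, A (V' s)) * k01 (V' τ) with hf2
    have hptw : ∀ τ ≤ (0:ℝ), |f1 τ - f2 τ| ≤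
        g₁ * (Real.exp (ν * τ) * G τ)
          + g₀ * g₂ * (Real.exp (ν * τ) * ∫ s in Set.Ioc τ 0, G s) := by
      intro τ hτ
      have hIV := hIle V hV hVm τ hτ
      have hIV' := hIle V' hV' hV'm τ hτ
      have hIIa : IntervalIntegrable (fun s => A (V s)) volume τ 0 :=
        myII2 (hAcont.measurable.comp hV) hτ (fun s hs => hCA _ (hVm s hs))
      have hIIb : IntervalIntegrable (fun s => A (V' s)) volume τ 0 :=
        myII2 (hAcont.measurable.comp hV') hτ (fun s hs => hCA _ (hV'm s hs))
      have hIIabs : IntervalIntegrable (fun s => |A (V s) - A (V' s)|) volume τ 0 :=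
        (hIIa.sub hIIb).abs
      have hIIG : IntervalIntegrable G volume τ 0 :=
        myII2 hGm hτ
          (fun s hs => le_trans (le_of_eq (abs_of_nonneg (hG0 s))) (hGbd s hs))
      have hstep4 : |(∫ s in τ..0, A (V s)) - ∫ s in τ..0, A (V' s)|
          ≤ g₂ * ∫ s in Set.Ioc τ 0, G s := by
        rw [← intervalIntegral.integral_sub hIIa hIIb]
        calc |∫ s in τ..0, (A (V s) - A (V' s))|
            ≤ ∫ s in τ..0, |A (V s) - A (V' s)| :=
              intervalIntegral.abs_integral_le_integral_abs hτ
          _ ≤ ∫ s in τ..0, g₂ * G s := by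
              apply intervalIntegral.integral_mono_on hτ hIIabs (hIIG.const_mul g₂)
              intro s hs
              exact myLipOfDeriv hAc hg₂b (hVm s hs.2) (hV'm s hs.2)
          _ = g₂ * ∫ s in τ..0, G s := intervalIntegral.integral_const_mul g₂ G
          _ = g₂ * ∫ s in Set.Ioc τ 0, G s := by rw [intervalIntegral.integral_of_le hτ]
      have e1 : f1 τ - f2 τ =
          Real.exp (∫ s in τ..0, A (V s)) * (k01 (V τ) - k01 (V' τ))
          + k01 (V' τ) * (Real.exp (∫ s in τ..0, A (V s))
              - Real.exp (∫ s in τ..0, A (V' s))) := by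
        simp only [hf1, hf2]; ring
      have h5 : |Real.exp (∫ s in τ..0, A (V s)) - Real.exp (∫ s in τ..0, A (V' s))|
          ≤ Real.exp (ν * τ) * (g₂ * ∫ s in Set.Ioc τ 0, G s) :=
        (myExpLip hIV hIV').trans (mul_le_mul_of_nonneg_left hstep4 (Real.exp_pos _).le)
      have h6 : Real.exp (∫ s in τ..0, A (V s)) * |k01 (V τ) - k01 (V' τ)|
          ≤ Real.exp (ν * τ) * (g₁ * G τ) :=
        mul_le_mul (Real.exp_le_exp.2 hIV)
          (myLipOfDeriv hk01 hg₁b (hVm τ hτ) (hV'm τ hτ)) (abs_nonneg _) (Real.exp_pos _).le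
      have h7 : k01 (V' τ) * |Real.exp (∫ s in τ..0, A (V s))
            - Real.exp (∫ s in τ..0, A (V' s))|
          ≤ g₀ * (Real.exp (ν * τ) * (g₂ * ∫ s in Set.Ioc τ 0, G s)) :=
        mul_le_mul (hk01le _ (hV'm τ hτ)) h5 (abs_nonneg _) hg₀0
      calc |f1 τ - f2 τ|
          ≤ Real.exp (∫ s in τ..0, A (V s)) * |k01 (V τ) - k01 (V' τ)|
            + k01 (V' τ) * |Real.exp (∫ s in τ..0, A (V s))
                - Real.exp (∫ s in τ..0, A (V' s))| := by
            rw [e1]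
            refine (abs_add_le _ _).trans ?_
            rw [abs_mul, abs_mul, abs_of_nonneg (Real.exp_pos _).le,
              abs_of_nonneg (hk01n _)]
        _ ≤ Real.exp (ν * τ) * (g₁ * G τ)
            + g₀ * (Real.exp (ν * τ) * (g₂ * ∫ s in Set.Ioc τ 0, G s)) := add_le_add h6 h7
        _ = g₁ * (Real.exp (ν * τ) * G τ)
            + g₀ * g₂ * (Real.exp (ν * τ) * ∫ s in Set.Ioc τ 0, G s) := by ring
    have hrhsint : IntegrableOn (fun τ => g₁ * (Real.exp (ν * τ) * G τ)
        + g₀ * g₂ * (Real.exp (ν * τ) * ∫ s in Set.Ioc τ 0, G s)) (Set.Iic 0) :=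
      (hT1int.const_mul g₁).add (hT2int.const_mul (g₀ * g₂))
    have hdint1 := hint V hV hVm
    have hdint2 := hint V' hV' hV'm
    have habs_int : IntegrableOn (fun τ => |f1 τ - f2 τ|) (Set.Iic 0) :=
      (hdint1.sub hdint2).abs
    have hFdiff : F V - F V' = ∫ τ in Set.Iic (0:ℝ), (f1 τ - f2 τ) := by
      rw [hF V, hF V', ← integral_sub hdint1 hdint2]
    have h7 : |F V - F V'| ≤ ∫ τ in Set.Iic (0:ℝ), |f1 τ - f2 τ| := by
      rw [hFdiff]
      simpa [Real.norm_eq_abs] using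
        norm_integral_le_integral_norm (μ := volume.restrict (Set.Iic (0:ℝ)))
          (fun τ => f1 τ - f2 τ)
    have h8 : (∫ τ in Set.Iic (0:ℝ), |f1 τ - f2 τ|) ≤
        ∫ τ in Set.Iic (0:ℝ), (g₁ * (Real.exp (ν * τ) * G τ)
          + g₀ * g₂ * (Real.exp (ν * τ) * ∫ s in Set.Ioc τ 0, G s)) := by
      apply integral_mono_ae habs_int hrhsint
      rw [Filter.EventuallyLE, ae_restrict_iff' measurableSet_Iic]
      exact Filter.Eventually.of_forall hptw
    have h9 : (∫ τ in Set.Iic (0:ℝ), (g₁ * (Real.exp (ν * τ) * G τ)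
          + g₀ * g₂ * (Real.exp (ν * τ) * ∫ s in Set.Ioc τ 0, G s)))
        = g₁ * (∫ τ in Set.Iic (0:ℝ), Real.exp (ν * τ) * G τ)
          + g₀ * g₂ * ((1/ν) * ∫ s in Set.Iic (0:ℝ), Real.exp (ν * s) * G s) := by
      rw [integral_add (hT1int.const_mul g₁) (hT2int.const_mul (g₀ * g₂)),
        integral_const_mul, integral_const_mul, hT2eq]
    have h10 : |F V - F V'| ≤ (g₁ + g₀ * g₂ / ν)
        * ∫ s in Set.Iic (0:ℝ), Real.exp (ν * s) * G s := by
      refine (h7.trans (h8.trans_eq h9)).trans_eq ?_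
      field_simp
    calc |F V - F V'|
        ≤ (g₁ + g₀ * g₂ / ν) * ∫ s in Set.Iic (0:ℝ), Real.exp (ν * s) * G s := h10
      _ ≤ (g₁ + g₀ * g₂ / ν) * (N * ∫ τ in Set.Iic (0:ℝ), Real.exp (ν * τ) / w τ) :=
          mul_le_mul_of_nonneg_left hT1le hcoef0
      _ = M * N := by rw [hM]; ring
  refine ⟨hint, main, ?_⟩
  intro ε hε
  have hM1 : (0:ℝ) < M + 1 := by linarith
  refine ⟨ε / (M + 1), by positivity, ?_⟩
  intro V V' hV hV' hVm hV'm hlt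
  calc |F V - F V'| ≤ M * essSup (fun t => w t * |V t - V' t|)
        (volume.restrict (Set.Iic (0:ℝ))) := main V V' hV hV' hVm hV'm
    _ ≤ M * (ε / (M + 1)) := mul_le_mul_of_nonneg_left hlt.le hM0
    _ < ε := by
        rw [← mul_div_assoc, div_lt_iff₀ hM1]
        nlinarith
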